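/- arXiv:0811.4632 — 2 statements merged into one kernel-verified Lean document; each statement's English description precedes it below -/
import Mathlib

section
/- Let 𝒜 be a Grothendieck abelian category with generating set of objects I. An object E of the unbounded derived category D(𝒜) is the zero object if and only if every map A[j] → E in D(𝒜) is zero for all A ∈ I and all j ∈ ℤ. -/
open CategoryTheory Limits

universe v u w

open ZeroObject

namespace Statement12Aux

open HomologicalComplex

variable {C : Type u} [Category.{v} C] [Abelian C] {ι : Type*} [DecidableEq ι]
  {c : ComplexShape ι}

lemma homologyMap_from_single {K : HomologicalComplex C c} {j : ι} {A : C}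
    (f : (single C c j).obj A ⟶ K) (θ : A ⟶ K.cycles j)
    (hθ : θ ≫ K.iCycles j = (singleObjXSelf c j A).inv ≫ f.f j) :
    homologyMap f j = (singleObjHomologySelfIso c j A).hom ≫ θ ≫ K.homologyπ j := by
  have h1 : cyclesMap f j = (singleObjCyclesSelfIso c j A).hom ≫ θ := by
    rw [← cancel_mono (K.iCycles j), cyclesMap_i, Category.assoc, hθ,
      singleObjCyclesSelfIso_hom]
    simp
  rw [← cancel_epi (((single C c j).obj A).homologyπ j), homologyπ_naturality, h1,
    homologyπ_singleObjHomologySelfIso_hom_assoc]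
  simp

end Statement12Aux

/-- Let `𝒜` be a Grothendieck abelian category (an abelian category with
set-indexed colimits, exact filtered colimits (AB5), and a generating set `I`
of objects: every object admits an epimorphism from a coproduct of objects of
`I`).  An object `E` of the unbounded derived category `D(𝒜)` is the zero
object if and only if every map `A[j] ⟶ E` in `D(𝒜)` is zero, for all `A ∈ I`
and all `j ∈ ℤ`. -/
theorem statement_12 (𝒜 : Type u) [Category.{v} 𝒜] [Abelian 𝒜]
    [HasColimits 𝒜] [AB5 𝒜] [HasDerivedCategory.{w} 𝒜]
    (I : Set 𝒜)
    (hI : ∀ E : 𝒜, ∃ (ι : Type v) (g : ι → 𝒜) (_ : ∀ x, g x ∈ I)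
      (π : (∐ g) ⟶ E), Epi π) :
    ∀ E : DerivedCategory 𝒜,
      IsZero E ↔
        ∀ A ∈ I, ∀ j : ℤ,
          ∀ f : ((DerivedCategory.singleFunctor 𝒜 0).obj A)⟦j⟧ ⟶ E, f = 0 := by
  intro E
  constructor
  · intro h A _ j f
    exact h.eq_of_tgt f 0
  · intro hyp
    -- obtain a cochain complex representing `E`
    haveI : (DerivedCategory.Q (C := 𝒜)).EssSurj :=
      Localization.essSurj _ (HomologicalComplex.quasiIso 𝒜 (ComplexShape.up ℤ))
    obtain ⟨K, ⟨eE⟩⟩ : ∃ K : CochainComplex 𝒜 ℤ,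
        Nonempty (DerivedCategory.Q.obj K ≅ E) :=
      ⟨_, ⟨DerivedCategory.Q.objObjPreimageIso E⟩⟩
    -- step 1 : every map from a generator to a cycle object maps to zero in homology
    have key : ∀ (n : ℤ) (A : 𝒜), A ∈ I → ∀ θ : A ⟶ K.cycles n,
        θ ≫ K.homologyπ n = 0 := by
      intro n A hA θ
      set θc : (HomologicalComplex.single 𝒜 (ComplexShape.up ℤ) n).obj A ⟶ K :=
        HomologicalComplex.mkHomFromSingle (θ ≫ K.iCycles n)
          (fun k _ => by rw [Category.assoc, HomologicalComplex.iCycles_d, comp_zero])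
        with hθc
      let e1 := ((DerivedCategory.singleFunctors 𝒜).shiftIso (-n) n 0 (by omega)).app A
      let e2 := ((SingleFunctors.evaluation _ _ n).mapIso
        (DerivedCategory.singleFunctorsPostcompQIso 𝒜)).app A
      have h0 : DerivedCategory.Q.map θc = 0 := by
        have h := hyp A hA (-n) (e1.hom ≫ e2.hom ≫ DerivedCategory.Q.map θc ≫ eE.hom)
        rw [← cancel_mono eE.hom]
        apply (cancel_epi e2.hom).1
        apply (cancel_epi e1.hom).1
        erw [zero_comp, comp_zero, comp_zero]
        exact h
      have h1 : HomologicalComplex.homologyMap θc n = 0 := by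
        have nat := (DerivedCategory.homologyFunctorFactors 𝒜 n).hom.naturality θc
        have : (DerivedCategory.homologyFunctor 𝒜 n).map (DerivedCategory.Q.map θc) = 0 := by
          rw [h0, Functor.map_zero]
        rw [Functor.comp_map, this, zero_comp] at nat
        apply (cancel_epi ((DerivedCategory.homologyFunctorFactors 𝒜 n).hom.app
          ((HomologicalComplex.single 𝒜 (ComplexShape.up ℤ) n).obj A))).1
        erw [comp_zero]
        exact nat.symm
      rw [Statement12Aux.homologyMap_from_single θc θ
        (by rw [hθc, HomologicalComplex.mkHomFromSingle_f, Iso.inv_hom_id_assoc])] at h1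
      rw [← cancel_epi (HomologicalComplex.singleObjHomologySelfIso
        (ComplexShape.up ℤ) n A).hom]
      simpa using h1
    -- step 2 : all homology objects of `K` vanish
    have hK : ∀ n : ℤ, IsZero (K.homology n) := by
      intro n
      obtain ⟨κ, g, hg, π, hπ⟩ := hI (K.cycles n)
      have : π ≫ K.homologyπ n = 0 := by
        ext x
        simpa using key n (g x) (hg x) (Sigma.ι g x ≫ π)
      exact IsZero.of_epi_eq_zero (π ≫ K.homologyπ n) this
    -- step 3 : conclude
    have hzero : ∀ n : ℤ, IsZero ((0 : CochainComplex 𝒜 ℤ).homology n) := fun n =>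
      (HomologicalComplex.homologyFunctor 𝒜 (ComplexShape.up ℤ) n).map_isZero (isZero_zero _)
    haveI : QuasiIso (0 : (0 : CochainComplex 𝒜 ℤ) ⟶ K) := by
      rw [quasiIso_iff]
      intro n
      rw [quasiIsoAt_iff_isIso_homologyMap]
      exact ⟨0, (hzero n).eq_of_src _ _, (hK n).eq_of_src _ _⟩
    haveI : IsIso (DerivedCategory.Q.map (0 : (0 : CochainComplex 𝒜 ℤ) ⟶ K)) :=
      inferInstance
    have : IsZero (DerivedCategory.Q.obj K) := by
      refine IsZero.of_iso ?_ (asIso (DerivedCategory.Q.map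
        (0 : (0 : CochainComplex 𝒜 ℤ) ⟶ K))).symm
      exact DerivedCategory.Q.map_isZero (isZero_zero _)
    exact this.of_iso eE.symm
end

section
/- Let (E, *, η) be a category with duality: * : E^op → E a functor and η: 1 → ** a natural transformation with (η_A)* ∘ η_{A*} = 1_{A*} for all objects A. For a form functor (F, φ): (A, *, α) → (B, *, β) with duality compatibility φ: F∘* → *∘F satisfying (φ_A)* ∘ β_{FA} = φ_{A*} ∘ F(α_A), the assignment φ̂_A = φ_{A*} ∘ F(α_A) defines a symmetric form on F in the functor category Fun(A,B) equipped with the duality F^♯ = *F* and double-dual identification (η_F)_A = β_{F(A**)} ∘ F(α_A); conversely φ_A = F(α_A)* ∘ φ̂_{A*}. These two assignments are mutually inverse bijections between duality compatibility morphisms and symmetric forms on F. -/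
open CategoryTheory Opposite

universe v₁ v₂ u₁ u₂

/-- A category with duality: a functor `* : Cᵒᵖ ⥤ C` together with a double
dual identification `η : 1 ⟶ **` satisfying `1_{A*} = (η_A)* ∘ η_{A*}`. -/
structure DualityData (C : Type u₁) [Category.{v₁} C] where
  /-- the duality functor `X ↦ X*` -/
  D : Cᵒᵖ ⥤ C
  /-- the double dual identification `η_X : X ⟶ X**` -/
  η : ∀ X : C, X ⟶ D.obj (op (D.obj (op X)))
  η_natural : ∀ {X Y : C} (f : X ⟶ Y),
    f ≫ η Y = η X ≫ D.map (D.map f.op).op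
  coherence : ∀ X : C,
    η (D.obj (op X)) ≫ D.map (η X).op = 𝟙 (D.obj (op X))

variable {A : Type u₁} [Category.{v₁} A] {B : Type u₂} [Category.{v₂} B]

variable (dA : DualityData A) (dB : DualityData B) (F : A ⥤ B)

/-- A duality compatibility morphism for `F`: a natural family
`φ_X : F(X*) ⟶ (F X)*` satisfying `(φ_X)* ∘ β_{F X} = φ_{X*} ∘ F(η_X)`,
i.e. `(F, φ)` is a form functor. -/
def IsDualityCompat
    (φ : ∀ X : A, F.obj (dA.D.obj (op X)) ⟶ dB.D.obj (op (F.obj X))) : Prop :=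
  (∀ {X Y : A} (f : X ⟶ Y),
    F.map (dA.D.map f.op) ≫ φ X = φ Y ≫ dB.D.map (F.map f).op) ∧
  (∀ X : A,
    dB.η (F.obj X) ≫ dB.D.map (φ X).op =
      F.map (dA.η X) ≫ φ (dA.D.obj (op X)))

/-- A symmetric form on the functor `F` in the category `Fun(A,B)` with the
duality `F ↦ F^♯ = * ∘ F ∘ *` and double dual identification
`(η_F)_X = β_{F(X**)} ∘ F(α_X)`: a natural transformation `ψ : F ⟶ F^♯`
with `ψ^♯ ∘ η_F = ψ`. -/
def IsSymmetricFormOnFunctor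
    (ψ : ∀ X : A, F.obj X ⟶ dB.D.obj (op (F.obj (dA.D.obj (op X))))) : Prop :=
  (∀ {X Y : A} (f : X ⟶ Y),
    F.map f ≫ ψ Y = ψ X ≫ dB.D.map (F.map (dA.D.map f.op)).op) ∧
  (∀ X : A,
    (F.map (dA.η X) ≫
        dB.η (F.obj (dA.D.obj (op (dA.D.obj (op X)))))) ≫
      dB.D.map (ψ (dA.D.obj (op X))).op = ψ X)

/-- The symmetric form `φ̂` associated with a duality compatibility morphism
`φ` : `φ̂_X = φ_{X*} ∘ F(η_X)`. -/
def hatOf (φ : ∀ X : A, F.obj (dA.D.obj (op X)) ⟶ dB.D.obj (op (F.obj X))) :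
    ∀ X : A, F.obj X ⟶ dB.D.obj (op (F.obj (dA.D.obj (op X)))) :=
  fun X => F.map (dA.η X) ≫ φ (dA.D.obj (op X))

/-- The duality compatibility morphism associated with a symmetric form `ψ` on
`F` : `φ_X = F(η_X)* ∘ ψ_{X*}`. -/
def compatOf (ψ : ∀ X : A, F.obj X ⟶ dB.D.obj (op (F.obj (dA.D.obj (op X))))) :
    ∀ X : A, F.obj (dA.D.obj (op X)) ⟶ dB.D.obj (op (F.obj X)) :=
  fun X => ψ (dA.D.obj (op X)) ≫ dB.D.map (F.map (dA.η X)).op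

/-- The assignments `φ ↦ φ̂ = φ_{X*} ∘ F(η_X)` and
`ψ ↦ (X ↦ F(η_X)* ∘ ψ_{X*})` are mutually inverse bijections between duality
compatibility morphisms on `F` (making `(F,φ)` a form functor) and symmetric
forms on `F` in the functor category with the duality `F^♯ = *F*`. -/
theorem statement_14 :
    (∀ φ, IsDualityCompat dA dB F φ →
      IsSymmetricFormOnFunctor dA dB F (hatOf dA dB F φ) ∧
        compatOf dA dB F (hatOf dA dB F φ) = φ) ∧
    (∀ ψ, IsSymmetricFormOnFunctor dA dB F ψ →
      IsDualityCompat dA dB F (compatOf dA dB F ψ) ∧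
        hatOf dA dB F (compatOf dA dB F ψ) = ψ) := by
  constructor
  · rintro φ ⟨hnat, hcoh⟩
    refine ⟨⟨fun {X Y} f => ?_, fun X => ?_⟩, ?_⟩
    · -- naturality of hatOf
      unfold hatOf
      simp only [Category.assoc]
      rw [← Functor.map_comp_assoc, dA.η_natural f, Functor.map_comp_assoc,
        hnat (dA.D.map f.op)]
    · -- symmetry of hatOf
      unfold hatOf
      simp only [Category.assoc, op_comp, Functor.map_comp]
      rw [reassoc_of% (hcoh (dA.D.obj (op (dA.D.obj (op X))))),
        ← hnat (dA.η (dA.D.obj (op X)))]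
      congr 1
      rw [← Functor.map_comp_assoc, dA.coherence (dA.D.obj (op X)), F.map_id,
        Category.id_comp]
    · -- compatOf (hatOf φ) = φ
      funext X
      unfold compatOf hatOf
      simp only [Category.assoc]
      rw [← hnat (dA.η X), ← Functor.map_comp_assoc,
        dA.coherence X, F.map_id, Category.id_comp]
  · rintro ψ ⟨hnat, hsym⟩
    have key : ∀ X : A,
        F.map (dA.η X) ≫ ψ (dA.D.obj (op (dA.D.obj (op X)))) ≫
          dB.D.map (F.map (dA.η (dA.D.obj (op X)))).op = ψ X := by
      intro X
      rw [reassoc_of% (hnat (dA.η X)), ← dB.D.map_comp, ← op_comp,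
        ← F.map_comp, dA.coherence X, F.map_id, op_id, dB.D.map_id,
        Category.comp_id]
    refine ⟨⟨fun {X Y} f => ?_, fun X => ?_⟩, ?_⟩
    · -- naturality of compatOf
      unfold compatOf
      simp only [Category.assoc]
      rw [reassoc_of% (hnat (dA.D.map f.op)), ← dB.D.map_comp, ← op_comp,
        ← F.map_comp, ← dA.η_natural f, F.map_comp, op_comp, dB.D.map_comp]
    · -- coherence of compatOf
      unfold compatOf
      rw [op_comp, dB.D.map_comp, ← reassoc_of% (dB.η_natural (F.map (dA.η X))),
        ← Category.assoc, hsym X, key X]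
    · -- hatOf (compatOf ψ) = ψ
      funext X
      unfold hatOf compatOf
      rw [← Category.assoc, Category.assoc]
      exact key X
end
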